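/- Let G be a finite abelian group. Then the representation dimension of G equals the rank of G, i.e., the smallest dimension of a faithful complex linear representation of G equals the minimal number of generators of G. -/

import Mathlib

/-- The representation dimension of a finite group `G`: the smallest `n` such that
`G` embeds into `GL(n, ℂ)`. -/
noncomputable def repDim (G : Type) [Group G] : ℕ :=
  sInf {n : ℕ | ∃ f : G →* Matrix.GeneralLinearGroup (Fin n) ℂ, Function.Injective f}

section Aux

lemma RepDimAux.hasEnough (A : Type*) [CommGroup A] [Finite A] :
    HasEnoughRootsOfUnity ℂ (Monoid.exponent A) := by
  have : NeZero ((Monoid.exponent A : ℂ)) :=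
    ⟨Nat.cast_ne_zero.mpr Monoid.exponent_ne_zero_of_finite⟩
  infer_instance

instance RepDimAux.finiteDual (A : Type*) [CommGroup A] [Finite A] : Finite (A →* ℂˣ) := by
  have := RepDimAux.hasEnough A
  obtain ⟨e⟩ := CommGroup.monoidHom_mulEquiv_of_hasEnoughRootsOfUnity A ℂ
  exact Finite.of_equiv A e.toEquiv.symm

lemma RepDimAux.cardDual (A : Type*) [CommGroup A] [Finite A] :
    Nat.card (A →* ℂˣ) = Nat.card A := by
  have := RepDimAux.hasEnough A
  obtain ⟨e⟩ := CommGroup.monoidHom_mulEquiv_of_hasEnoughRootsOfUnity A ℂ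
  exact Nat.card_congr e.toEquiv

lemma RepDimAux.rankDual (A : Type*) [CommGroup A] [Finite A] :
    Group.rank (A →* ℂˣ) = Group.rank A := by
  have := RepDimAux.hasEnough A
  obtain ⟨e⟩ := CommGroup.monoidHom_mulEquiv_of_hasEnoughRootsOfUnity A ℂ
  exact Group.rank_congr e

lemma RepDimAux.sep {A : Type*} [CommGroup A] [Finite A] {g : A}
    (hg : ∀ χ : A →* ℂˣ, χ g = 1) : g = 1 := by
  have := RepDimAux.hasEnough A
  by_contra h
  obtain ⟨φ, hφ⟩ := CommGroup.exists_apply_ne_one_of_hasEnoughRootsOfUnity A ℂ h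
  exact hφ (hg φ)

/-- pointwise units -/
def RepDimAux.piUnits (ι : Type*) : (ι → ℂˣ) →* (ι → ℂ)ˣ where
  toFun u := ⟨fun i => (u i : ℂ), fun i => ((u i)⁻¹ : ℂˣ),
    by funext i; simp, by funext i; simp⟩
  map_one' := by ext i; rfl
  map_mul' u v := by ext i; rfl

/-- diagonal embedding of units into GL -/
def RepDimAux.diagHom (ι : Type*) [Fintype ι] [DecidableEq ι] :
    (ι → ℂˣ) →* Matrix.GeneralLinearGroup ι ℂ :=
  (Units.map (Matrix.diagonalRingHom ι ℂ).toMonoidHom).comp (RepDimAux.piUnits ι)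

lemma RepDimAux.diagHom_inj (ι : Type*) [Fintype ι] [DecidableEq ι] :
    Function.Injective (RepDimAux.diagHom ι) := by
  intro u v h
  have h2 : Matrix.diagonal (fun i => (u i : ℂ)) = Matrix.diagonal (fun i => (v i : ℂ)) :=
    congrArg Units.val h
  have h3 := Matrix.diagonal_injective h2
  funext i
  exact Units.ext (congrFun h3 i)

end Aux

lemma RepDimAux.upper (G : Type) [CommGroup G] [Finite G] :
    ∃ f : G →* Matrix.GeneralLinearGroup (Fin (Group.rank G)) ℂ, Function.Injective f := by
  classical
  obtain ⟨S, hcard, hS⟩ := Group.rank_spec (G →* ℂˣ)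
  have hcard' : Fintype.card ↥S = Group.rank G := by
    rw [Fintype.card_coe, hcard, RepDimAux.rankDual]
  let e : Fin (Group.rank G) ≃ ↥S := (Fintype.equivFinOfCardEq hcard').symm
  let ψ : G →* (Fin (Group.rank G) → ℂˣ) :=
    { toFun := fun g i => ((e i : G →* ℂˣ) g)
      map_one' := by funext i; simp
      map_mul' := by intro g h; funext i; simp }
  have hψ : Function.Injective ψ := by
    rw [injective_iff_map_eq_one]
    intro g hg
    apply RepDimAux.sep (A := G)
    have hK : ∀ χ : G →* ℂˣ, χ ∈ Subgroup.closure (S : Set (G →* ℂˣ)) → χ g = 1 := by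
      intro χ hχ
      have hsub : (S : Set (G →* ℂˣ)) ⊆ ((MonoidHom.eval g).ker : Subgroup (G →* ℂˣ)) := by
        intro χ' hχ'
        have : χ' g = 1 := by
          have := congrFun hg (e.symm ⟨χ', hχ'⟩)
          simpa [ψ] using this
        simpa [MonoidHom.mem_ker] using this
      have := (Subgroup.closure_le _).mpr hsub hχ
      simpa [MonoidHom.mem_ker] using this
    intro χ
    exact hK χ (hS ▸ Subgroup.mem_top χ)
  exact ⟨(RepDimAux.diagHom _).comp ψ, (RepDimAux.diagHom_inj _).comp hψ⟩

open Module in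
lemma RepDimAux.lower (G : Type) [CommGroup G] [Finite G] {n : ℕ}
    (f : G →* Matrix.GeneralLinearGroup (Fin n) ℂ) (hf : Function.Injective f) :
    Group.rank G ≤ n := by
  classical
  set T : G → Module.End ℂ (Fin n → ℂ) := fun g => Matrix.toLinAlgEquiv' ((f g : Matrix (Fin n) (Fin n) ℂ)) with hT
  have hT1 : T 1 = 1 := by simp [hT]
  have hTmul : ∀ g h : G, T (g * h) = T g * T h := by
    intro g h
    simp [hT, map_mul]
  have hTpow : ∀ (g : G) (m : ℕ), T g ^ m = T (g ^ m) := by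
    intro g m
    simp only [hT]
    rw [← map_pow Matrix.toLinAlgEquiv', ← Units.val_pow_eq_pow_val, ← map_pow f]
  have hcomm : ∀ g h : G, Commute (T g) (T h) := by
    intro g h
    unfold Commute SemiconjBy
    rw [← hTmul, ← hTmul, mul_comm]
  -- the simultaneous eigenspace decomposition
  set W : (G → ℂ) → Submodule ℂ (Fin n → ℂ) := fun χ => ⨅ g, (T g).maxGenEigenspace (χ g) with hW
  have hWtop : ⨆ χ : G → ℂ, W χ = ⊤ :=
    Module.End.iSup_iInf_maxGenEigenspace_eq_top_of_iSup_maxGenEigenspace_eq_top_of_commute T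
      (fun g h _ => hcomm g h) (fun g => Module.End.iSup_maxGenEigenspace_eq_top (T g))
  have hInd : iSupIndep W :=
    Module.End.independent_iInf_maxGenEigenspace_of_forall_mapsTo T
      (fun i j φ => Module.End.mapsTo_maxGenEigenspace_of_comm (hcomm j i) φ)
  -- semisimplicity: maximal generalised eigenspaces are eigenspaces
  have hss : ∀ g : G, (T g).IsFinitelySemisimple := by
    intro g
    have hm : g ^ Nat.card G = 1 := pow_card_eq_one'
    have haev : (Polynomial.aeval (T g)) ((Polynomial.X : Polynomial ℂ) ^ Nat.card G - 1) = 0 := by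
      rw [map_sub, map_one, Polynomial.aeval_X_pow, hTpow, hm, hT1, sub_self]
    have hsq : Squarefree (Polynomial.X ^ Nat.card G - 1 : Polynomial ℂ) := by
      refine (Polynomial.X_pow_sub_one_separable_iff.mpr ?_).squarefree
      exact_mod_cast Nat.cast_ne_zero.mpr Nat.card_pos.ne'
    exact (Module.End.isSemisimple_of_squarefree_aeval_eq_zero hsq haev).isFinitelySemisimple
  have hEig : ∀ (χ : G → ℂ) (g : G), W χ ≤ (T g).eigenspace (χ g) := by
    intro χ g
    rw [← (hss g).maxGenEigenspace_eq_eigenspace]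
    exact iInf_le _ g
  -- the nonzero simultaneous eigenspaces
  haveI : Fintype {χ : G → ℂ // W χ ≠ ⊥} := hInd.fintypeNeBotOfFiniteDimensional
  have hcardP : Fintype.card {χ : G → ℂ // W χ ≠ ⊥} ≤ n := by
    have := hInd.subtype_ne_bot_le_finrank
    simpa using this
  -- eigenvectors
  have hvex : ∀ χ : {χ : G → ℂ // W χ ≠ ⊥}, ∃ v : Fin n → ℂ, v ∈ W χ.1 ∧ v ≠ 0 := by
    intro χ
    obtain ⟨v, hv1, hv2⟩ := Submodule.exists_mem_ne_zero_of_ne_bot χ.2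
    exact ⟨v, hv1, hv2⟩
  choose v hvW hv0 using hvex
  have heig : ∀ (χ : {χ : G → ℂ // W χ ≠ ⊥}) (g : G), T g (v χ) = χ.1 g • v χ := by
    intro χ g
    exact Module.End.mem_eigenspace_iff.mp (hEig χ.1 g (hvW χ))
  -- each nonzero simultaneous eigenvalue function is multiplicative
  have hmulval : ∀ (χ : {χ : G → ℂ // W χ ≠ ⊥}) (g h : G), χ.1 (g * h) = χ.1 g * χ.1 h := by
    intro χ g h
    apply smul_left_injective ℂ (hv0 χ)
    show χ.1 (g * h) • v χ = (χ.1 g * χ.1 h) • v χ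
    rw [← heig, hTmul, Module.End.mul_apply, heig, map_smul, heig, smul_smul, mul_comm]
  have honeval : ∀ χ : {χ : G → ℂ // W χ ≠ ⊥}, χ.1 1 = 1 := by
    intro χ
    apply smul_left_injective ℂ (hv0 χ)
    show χ.1 1 • v χ = (1 : ℂ) • v χ
    rw [← heig, hT1, one_smul]
    rfl
  -- bundle into characters
  set c : {χ : G → ℂ // W χ ≠ ⊥} → (G →* ℂˣ) := fun χ =>
    { toFun := fun g => ⟨χ.1 g, χ.1 g⁻¹,
        by rw [← hmulval, mul_inv_cancel, honeval],
        by rw [← hmulval, inv_mul_cancel, honeval]⟩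
      map_one' := Units.ext (honeval χ)
      map_mul' := fun g h => Units.ext (hmulval χ g h) } with hc
  have hcval : ∀ (χ : {χ : G → ℂ // W χ ≠ ⊥}) (g : G), ((c χ g : ℂˣ) : ℂ) = χ.1 g := by
    intro χ g; rfl
  -- joint kernel is trivial
  have hker : ∀ g : G, (∀ χ : {χ : G → ℂ // W χ ≠ ⊥}, χ.1 g = 1) → g = 1 := by
    intro g hg
    apply hf
    rw [map_one]
    ext1
    rw [Units.val_one]
    apply Matrix.toLinAlgEquiv'.injective
    rw [map_one]
    have hTg1 : T g = 1 := by
      refine LinearMap.ext fun w => ?_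
      have hw : w ∈ ⨆ χ : G → ℂ, W χ := hWtop ▸ Submodule.mem_top
      refine Submodule.iSup_induction (motive := fun x => T g x = x) _ hw ?_ ?_ ?_
      · intro χ x hx
        by_cases hχ : W χ = ⊥
        · rw [hχ, Submodule.mem_bot] at hx
          rw [hx, map_zero]
        · have hx' := Module.End.mem_eigenspace_iff.mp (hEig χ g hx)
          have : χ g = 1 := hg ⟨χ, hχ⟩
          rw [hx', this, one_smul]
      · show T g 0 = 0
        exact map_zero _
      · intro x y hx hy
        show T g (x + y) = x + y
        rw [map_add, show (T g) x = x from hx, show (T g) y = y from hy]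
    exact hTg1
  -- the characters generate the dual group
  set S' : Finset (G →* ℂˣ) := Finset.image c Finset.univ with hS'
  set H : Subgroup (G →* ℂˣ) := Subgroup.closure (S' : Set (G →* ℂˣ)) with hH
  have hScl : ∀ χ, c χ ∈ H := fun χ =>
    Subgroup.subset_closure (by simp [hS'])
  -- evaluation map into the dual of H
  set ev : G →* (↥H →* ℂˣ) :=
    { toFun := fun g =>
        { toFun := fun χ => (χ : G →* ℂˣ) g
          map_one' := rfl
          map_mul' := fun a b => rfl }
      map_one' := by ext χ; simp
      map_mul' := fun g h => by ext χ; simp } with hev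
  have hevinj : Function.Injective ev := by
    rw [injective_iff_map_eq_one]
    intro g hg
    apply hker
    intro χ
    have : ev g ⟨c χ, hScl χ⟩ = 1 := by rw [hg]; rfl
    have h2 : c χ g = 1 := this
    have := congrArg Units.val h2
    rw [hcval] at this
    simpa using this
  have hcardH : Nat.card ↥H = Nat.card (G →* ℂˣ) := by
    have h1 : Nat.card G ≤ Nat.card (↥H →* ℂˣ) := Nat.card_le_card_of_injective ev hevinj
    rw [RepDimAux.cardDual ↥H] at h1
    have h2 : Nat.card ↥H ≤ Nat.card (G →* ℂˣ) :=
      Nat.card_le_card_of_injective _ H.subtype_injective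
    rw [RepDimAux.cardDual G] at h2
    rw [RepDimAux.cardDual G]
    omega
  have hHtop : H = ⊤ := Subgroup.eq_top_of_card_eq H hcardH
  -- conclude
  have hrank : Group.rank (G →* ℂˣ) ≤ S'.card := Group.rank_le (hH ▸ hHtop)
  have hcardS' : S'.card ≤ n := le_trans Finset.card_image_le (by simpa using hcardP)
  rw [← RepDimAux.rankDual G]
  omega

/-- For a finite abelian group, the representation dimension equals the rank,
i.e. the minimal number of generators. -/
theorem repDim_eq_rank_of_comm (G : Type) [CommGroup G] [Finite G] :
    repDim G = Group.rank G := by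
  obtain ⟨f, hf⟩ := RepDimAux.upper G
  have hmem : Group.rank G ∈
      {n : ℕ | ∃ f : G →* Matrix.GeneralLinearGroup (Fin n) ℂ, Function.Injective f} := ⟨f, hf⟩
  refine le_antisymm (Nat.sInf_le hmem) ?_
  obtain ⟨f', hf'⟩ := Nat.sInf_mem (Set.nonempty_of_mem hmem)
  exact RepDimAux.lower G f' hf'
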